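/- Two n-vertex graphs G and H are generalized cospectral if and only if there exists an n×n regular orthogonal matrix Q such that Qᵀ A(G) Q = A(H). -/

import Mathlib

open Matrix

noncomputable section

section JNAux
open Polynomial Finset

variable {n : ℕ}

private lemma jn_eval_charpoly (M : Matrix (Fin n) (Fin n) ℝ) (x : ℝ) :
    M.charpoly.eval x = det (x • (1:Matrix (Fin n) (Fin n) ℝ) - M) := by
  rw [Matrix.charpoly, ← Polynomial.coe_evalRingHom, RingHom.map_det]
  congr 1
  ext i j
  by_cases h : i = j
  · subst h; simp [charmatrix_apply_eq, Matrix.one_apply]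
  · simp [charmatrix_apply_ne _ _ _ h, Matrix.one_apply_ne h]

private lemma jn_charpoly_conj (Q M : Matrix (Fin n) (Fin n) ℝ) (hQ : Qᵀ * Q = 1) :
    (Qᵀ * M * Q).charpoly = M.charpoly := by
  set Qm : Matrix (Fin n) (Fin n) ℝ[X] := C.mapMatrix Q with hQm
  have hqm : Qmᵀ * Qm = 1 := by
    have : Qmᵀ = C.mapMatrix Qᵀ := by simp [hQm, Matrix.transpose_map, RingHom.mapMatrix_apply]
    rw [this, hQm, ← _root_.map_mul, hQ, _root_.map_one]
  have key : charmatrix (Qᵀ * M * Q) = Qmᵀ * charmatrix M * Qm := by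
    unfold charmatrix
    have : C.mapMatrix (Qᵀ * M * Q) = Qmᵀ * C.mapMatrix M * Qm := by
      simp [hQm, _root_.map_mul, Matrix.transpose_map, RingHom.mapMatrix_apply]
    rw [this, Matrix.mul_sub, Matrix.sub_mul]
    congr 1
    rw [mul_assoc, (Matrix.scalar_commute (X : ℝ[X]) (fun r => Commute.all _ _) Qm).eq,
        ← mul_assoc, hqm, one_mul]
  rw [Matrix.charpoly, Matrix.charpoly, key, det_mul, det_mul]
  rw [mul_comm (det Qmᵀ), mul_assoc, ← det_mul, hqm, det_one, mul_one]

private lemma jn_charpoly_diagonal (d : Fin n → ℝ) :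
    (diagonal d).charpoly = ∏ i, (X - C (d i)) := by
  rw [Matrix.charpoly]
  have : charmatrix (diagonal d) = diagonal (fun i => (X:ℝ[X]) - C (d i)) := by
    ext i j
    by_cases h : i = j
    · subst h; simp [charmatrix_apply_eq]
    · simp [charmatrix_apply_ne _ _ _ h, diagonal_apply_ne _ h]
  rw [this, det_diagonal]

private lemma jn_exists_perm (f g : Fin n → ℝ)
    (h : Multiset.map f Finset.univ.val = Multiset.map g Finset.univ.val) :
    ∃ σ : Equiv.Perm (Fin n), f ∘ σ = g := by
  classical
  have hcard : ∀ a : ℝ, Fintype.card {i // g i = a} = Fintype.card {i // f i = a} := by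
    intro a
    have h1 : ∀ (p : Fin n → ℝ), Fintype.card {i // p i = a}
        = Multiset.count a (Multiset.map p Finset.univ.val) := by
      intro p
      rw [Multiset.count_map]
      rw [Fintype.card_subtype]
      rw [Finset.card, Finset.filter_val]
      congr 1
      apply Multiset.filter_congr
      intro x _
      exact ⟨fun hh => hh.symm, fun hh => hh.symm⟩
    rw [h1, h1, h]
  have e : ∀ a : ℝ, {i // g i = a} ≃ {i // f i = a} := fun a =>
    Fintype.equivOfCardEq (hcard a)
  refine ⟨(Equiv.sigmaFiberEquiv g).symm.trans ((Equiv.sigmaCongrRight e).trans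
    (Equiv.sigmaFiberEquiv f)), ?_⟩
  funext i
  simp only [Function.comp_apply, Equiv.trans_apply, Equiv.sigmaCongrRight_apply]
  have h1 : (Equiv.sigmaFiberEquiv g).symm i = ⟨g i, ⟨i, rfl⟩⟩ := rfl
  rw [h1]
  exact (e (g i) ⟨i, rfl⟩).2

private lemma jn_det_diag_sub_vecMulVec (c u : Fin n → ℝ) (hc : ∀ i, c i ≠ 0) :
    det (diagonal c - vecMulVec u u)
      = ∏ i, c i - ∑ i, u i ^ 2 * ∏ j ∈ univ.erase i, c j := by
  have key : diagonal c - vecMulVec u u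
      = diagonal c * (1 + replicateCol (Fin 1) (fun i => -(u i / c i)) * replicateRow (Fin 1) u) := by
    rw [Matrix.mul_add, mul_one, ← Matrix.mul_assoc]
    have h1 : diagonal c * replicateCol (Fin 1) (fun i => -(u i / c i)) = replicateCol (Fin 1) (fun i => -u i) := by
      ext i j
      simp only [mul_apply, diagonal_apply, replicateCol_apply]
      rw [Finset.sum_eq_single i (by intro b _ hb; simp [Ne.symm hb]) (by simp), if_pos rfl,
        mul_neg, mul_div_assoc', mul_comm, mul_div_assoc, div_self (hc i), mul_one]
    rw [h1]
    have h2 : replicateCol (Fin 1) (fun i => -(u i)) * replicateRow (Fin 1) u = -vecMulVec u u := by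
      ext i j
      simp [vecMulVec_apply, mul_apply]
    rw [h2, sub_eq_add_neg]
  rw [key, det_mul]
  erw [det_one_add_replicateCol_mul_replicateRow (ι := Fin 1) (fun i => -(u i / c i)) u]
  rw [det_diagonal]
  have h3 : (u ⬝ᵥ fun i => -(u i / c i)) = -∑ i, u i ^ 2 / c i := by
    simp only [dotProduct, mul_neg, ← Finset.sum_neg_distrib]
    congr 1; funext i; ring
  rw [h3, ← sub_eq_add_neg, mul_sub, mul_one, Finset.mul_sum]
  congr 1
  apply Finset.sum_congr rfl
  intro i _
  rw [← Finset.mul_prod_erase univ c (mem_univ i)]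
  rw [mul_comm (c i), mul_assoc, ← mul_div_assoc, mul_div_cancel_left₀ _ (hc i), mul_comm]

private lemma jn_block_sums_eq (d cvec : Fin n → ℝ)
    (hmain : ∀ y : ℝ, (∀ i, y + d i ≠ 0) →
        ∑ i, cvec i * ∏ j ∈ univ.erase i, (y + d j) = 0)
    (lam : ℝ) :
    ∑ i ∈ univ.filter (fun i => d i = lam), cvec i = 0 := by
  classical
  by_cases hr : ∃ i, d i = lam
  case neg =>
    push_neg at hr
    rw [Finset.filter_false_of_mem (fun i _ => hr i), Finset.sum_empty]
  set S := univ.filter (fun i => d i = lam) with hS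
  set T := univ.filter (fun i => ¬ d i = lam) with hT
  have hm : 1 ≤ S.card := by
    obtain ⟨i, hi⟩ := hr
    exact Finset.card_pos.mpr ⟨i, by simp [hS, hi]⟩
  set s : ℝ[X] := ∏ j ∈ T, (X + C (d j)) with hs
  set P : ℝ[X] := C (∑ i ∈ S, cvec i) * s
      + (X + C lam) * ∑ i ∈ T, C (cvec i) * ∏ j ∈ T.erase i, (X + C (d j)) with hP
  have key : ∀ y : ℝ, ∑ i, cvec i * ∏ j ∈ univ.erase i, (y + d j)
      = (y + lam) ^ (S.card - 1) * P.eval y := by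
    intro y
    have hsplit := Finset.sum_filter_add_sum_filter_not univ (fun i => d i = lam)
      (fun i => cvec i * ∏ j ∈ univ.erase i, (y + d j))
    rw [← hsplit, ← hS, ← hT]
    have hSpart : ∀ i ∈ S, cvec i * ∏ j ∈ univ.erase i, (y + d j)
        = cvec i * ((y + lam) ^ (S.card - 1) * s.eval y) := by
      intro i hi
      congr 1
      rw [← Finset.prod_filter_mul_prod_filter_not (univ.erase i) (fun j => d j = lam)]
      have h1 : (univ.erase i).filter (fun j => d j = lam) = S.erase i := by
        rw [hS, Finset.filter_erase]
      have h2 : (univ.erase i).filter (fun j => ¬ d j = lam) = T := by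
        rw [hT, Finset.filter_erase, Finset.erase_eq_of_notMem (by simp [hT]; simpa [hS] using hi)]
      rw [h1, h2]
      have h3 : ∏ j ∈ S.erase i, (y + d j) = (y + lam) ^ (S.card - 1) := by
        rw [Finset.prod_congr rfl (fun j hj => ?_), Finset.prod_const,
          Finset.card_erase_of_mem hi]
        have : d j = lam := by
          have := Finset.mem_of_mem_erase hj
          simp [hS] at this; exact this
        rw [this]
      rw [h3]
      congr 1
      rw [hs, eval_prod]
      exact Finset.prod_congr rfl (fun j _ => by simp)
    have hTpart : ∀ i ∈ T, cvec i * ∏ j ∈ univ.erase i, (y + d j)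
        = (y + lam) ^ (S.card - 1) * ((y + lam) * (cvec i * ∏ j ∈ T.erase i, (y + d j))) := by
      intro i hi
      have h1 : (univ.erase i).filter (fun j => d j = lam) = S := by
        rw [hS, Finset.filter_erase, Finset.erase_eq_of_notMem (by simp [hS]; simpa [hT] using hi)]
      have h2 : (univ.erase i).filter (fun j => ¬ d j = lam) = T.erase i := by
        rw [hT, Finset.filter_erase]
      rw [← Finset.prod_filter_mul_prod_filter_not (univ.erase i) (fun j => d j = lam), h1, h2]
      have h3 : ∏ j ∈ S, (y + d j) = (y + lam) ^ S.card := by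
        rw [Finset.prod_congr rfl (fun j hj => ?_), Finset.prod_const]
        have : d j = lam := by simp [hS] at hj; exact hj
        rw [this]
      rw [h3]
      have h4 : (y + lam) ^ S.card = (y + lam) ^ (S.card - 1) * (y + lam) := by
        conv_lhs => rw [← Nat.sub_add_cancel hm]
        rw [pow_succ]
      rw [h4]; ring
    rw [Finset.sum_congr rfl hSpart, Finset.sum_congr rfl hTpart]
    rw [← Finset.sum_mul, ← Finset.mul_sum, ← Finset.mul_sum]
    have hPeval : eval y P = (∑ i ∈ S, cvec i) * eval y s
        + (y + lam) * ∑ i ∈ T, cvec i * ∏ j ∈ T.erase i, (y + d j) := by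
      simp [hP, eval_prod, eval_finset_sum]
    rw [hPeval]
    ring
  have hP0 : P = 0 := by
    apply Polynomial.eq_zero_of_infinite_isRoot
    apply Set.Infinite.mono (s := (Set.range (fun i => -d i))ᶜ)
    · intro y hy
      have hy' : ∀ i, y + d i ≠ 0 := by
        intro i h
        exact hy ⟨i, show -d i = y by linarith⟩
      have h0 := hmain y hy'
      rw [key y] at h0
      have hylam : y + lam ≠ 0 := by
        obtain ⟨i, hi⟩ := hr
        have := hy' i; rw [hi] at this; exact this
      have := mul_eq_zero.mp h0
      rcases this with h | h
      · exact absurd h (pow_ne_zero _ hylam)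
      · exact h
    · exact Set.Finite.infinite_compl (Set.finite_range _)
  have := congrArg (Polynomial.eval (-lam)) hP0
  rw [hP] at this
  simp only [eval_add, eval_mul, eval_C, eval_X, eval_zero] at this
  rw [show -lam + lam = 0 by ring] at this
  rw [zero_mul, add_zero] at this
  have hsne : Polynomial.eval (-lam) s ≠ 0 := by
    rw [hs, eval_prod]
    apply Finset.prod_ne_zero_iff.mpr
    intro j hj
    have : ¬ d j = lam := by simp [hT] at hj; exact hj
    simp only [eval_add, eval_X, eval_C]
    intro h; apply this; linarith
  exact (mul_eq_zero.mp this).resolve_right hsne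

private lemma jn_exists_R (d u w : Fin n → ℝ)
    (h : ∀ lam : ℝ, ∑ i ∈ univ.filter (fun i => d i = lam), u i ^ 2
        = ∑ i ∈ univ.filter (fun i => d i = lam), w i ^ 2) :
    ∃ R : Matrix (Fin n) (Fin n) ℝ,
      Rᵀ * R = 1 ∧ R * diagonal d = diagonal d * R ∧ R *ᵥ w = u := by
  classical
  set v : Fin n → ℝ := fun i => u i - w i with hv
  set N : ℝ → ℝ := fun lam => ∑ i ∈ univ.filter (fun i => d i = lam), v i ^ 2 with hN
  set M : Matrix (Fin n) (Fin n) ℝ :=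
    Matrix.of (fun i j => if d i = d j ∧ N (d i) ≠ 0 then 2 * v i * v j / N (d i) else 0) with hM
  have hvzero : ∀ i, N (d i) = 0 → v i = 0 := by
    intro i h0
    have := (Finset.sum_eq_zero_iff_of_nonneg (fun j _ => sq_nonneg (v j))).mp h0 i (by simp)
    exact pow_eq_zero_iff two_ne_zero |>.mp this
  have hvw : ∀ lam : ℝ, ∑ i ∈ univ.filter (fun i => d i = lam), v i * w i = - N lam / 2 := by
    intro lam
    set F := univ.filter (fun i => d i = lam) with hF
    have e1 : ∑ i ∈ F, v i * w i = (∑ i ∈ F, u i * w i) - ∑ i ∈ F, w i ^ 2 := by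
      rw [← Finset.sum_sub_distrib]
      exact Finset.sum_congr rfl (fun i _ => by simp only [hv]; ring)
    have e2 : N lam = ((∑ i ∈ F, u i ^ 2) - 2 * (∑ i ∈ F, u i * w i)) + ∑ i ∈ F, w i ^ 2 := by
      rw [hN, Finset.mul_sum, ← Finset.sum_sub_distrib, ← Finset.sum_add_distrib]
      exact Finset.sum_congr rfl (fun i _ => by simp only [hv]; ring)
    have e3 := h lam
    rw [← hF] at e3
    rw [e1]; rw [e3] at e2; linarith
  have hMsymm : Mᵀ = M := by
    ext i j
    rw [transpose_apply]
    by_cases hd : d i = d j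
    · simp only [hM, of_apply, hd]
      by_cases h0 : N (d j) = 0
      · simp [h0]
      · simp only [h0, ne_eq, not_false_iff, and_true, if_pos rfl]
        ring
    · have e1 : M j i = 0 := by
        simp only [hM, of_apply]; exact if_neg (fun hh => hd hh.1.symm)
      have e2 : M i j = 0 := by
        simp only [hM, of_apply]; exact if_neg (fun hh => hd hh.1)
      rw [e1, e2]
  have hMM : M * M = M + M := by
    ext i j
    rw [mul_apply, Matrix.add_apply]
    by_cases hc : d i = d j ∧ N (d i) ≠ 0
    · obtain ⟨hd, hN0⟩ := hc
      have step : ∀ k, M i k * M k j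
          = (if d k = d i then (2 * v i * v k / N (d i)) * (2 * v k * v j / N (d i)) else 0) := by
        intro k
        by_cases hk : d k = d i
        · have c1 : d i = d k ∧ N (d i) ≠ 0 := ⟨hk.symm, hN0⟩
          have c2 : d k = d j ∧ N (d k) ≠ 0 := ⟨hk.trans hd, by rw [hk]; exact hN0⟩
          simp only [hM, of_apply]
          rw [if_pos c1, if_pos c2, if_pos hk, hk]
        · have c1 : ¬ (d i = d k ∧ N (d i) ≠ 0) := fun hh => hk hh.1.symm
          simp only [hM, of_apply, if_neg c1, if_neg hk, zero_mul]
      rw [Finset.sum_congr rfl (fun k _ => step k), ← Finset.sum_filter]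
      have e4 : ∑ k ∈ univ.filter (fun k => d k = d i),
          (2 * v i * v k / N (d i)) * (2 * v k * v j / N (d i))
          = (2 * v i * (2 * v j) / (N (d i) * N (d i)))
            * ∑ k ∈ univ.filter (fun k => d k = d i), v k ^ 2 := by
        rw [Finset.mul_sum]
        exact Finset.sum_congr rfl (fun k _ => by field_simp)
      have e5 : ∑ k ∈ univ.filter (fun k => d k = d i), v k ^ 2 = N (d i) := by rw [hN]
      rw [e4, e5]
      have : M i j = 2 * v i * v j / N (d i) := by
        simp only [hM, of_apply, if_pos (⟨hd, hN0⟩ : d i = d j ∧ N (d i) ≠ 0)]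
      rw [this]
      field_simp
      ring
    · have step : ∀ k, M i k * M k j = 0 := by
        intro k
        by_cases c1 : d i = d k ∧ N (d i) ≠ 0
        · have c2 : ¬ (d k = d j ∧ N (d k) ≠ 0) := by
            intro hh
            exact hc ⟨c1.1.trans hh.1, c1.2⟩
          simp only [hM, of_apply, if_neg c2, mul_zero]
        · simp only [hM, of_apply, if_neg c1, zero_mul]
      rw [Finset.sum_congr rfl (fun k _ => step k), Finset.sum_const_zero]
      have : M i j = 0 := by simp only [hM, of_apply, if_neg hc]
      rw [this, add_zero]
  have hcomm : M * diagonal d = diagonal d * M := by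
    ext i j
    rw [mul_diagonal, diagonal_mul]
    by_cases hd : d i = d j
    · rw [hd, mul_comm]
    · have : M i j = 0 := by simp [hM, hd]
      rw [this, zero_mul, mul_zero]
  refine ⟨1 - M, ?_, ?_, ?_⟩
  · rw [transpose_sub, transpose_one, hMsymm]
    have expand : (1 - M) * (1 - M) = 1 - M - M + M * M := by noncomm_ring
    rw [expand, hMM]
    abel
  · rw [Matrix.sub_mul, Matrix.mul_sub, one_mul, mul_one, hcomm]
  · funext i
    rw [sub_mulVec, one_mulVec]
    have hMw : (M *ᵥ w) i = - v i := by
      rw [mulVec]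
      by_cases h0 : N (d i) = 0
      · have hz : ∀ j, M i j * w j = 0 := by
          intro j
          have : M i j = 0 := by
            simp only [hM, of_apply]
            rw [if_neg]
            rintro ⟨-, hne⟩; exact hne h0
          rw [this, zero_mul]
        rw [dotProduct, Finset.sum_congr rfl (fun j _ => hz j), Finset.sum_const_zero]
        rw [hvzero i h0]; ring
      · have step : ∀ j, M i j * w j
            = (if d j = d i then (2 * v i / N (d i)) * (v j * w j) else 0) := by
          intro j
          by_cases hj : d j = d i
          · simp only [hM, of_apply, if_pos (⟨hj.symm, h0⟩ : d i = d j ∧ N (d i) ≠ 0), if_pos hj]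
            ring
          · simp only [hM, of_apply, if_neg hj,
              if_neg (fun hh => hj ((hh : d i = d j ∧ _).1.symm)), zero_mul]
        rw [dotProduct, Finset.sum_congr rfl (fun j _ => step j), ← Finset.sum_filter,
          ← Finset.mul_sum, hvw (d i)]
        field_simp
    rw [Pi.sub_apply, hMw]
    simp only [hv]
    ring

private lemma jn_perm_orth (τ : Equiv.Perm (Fin n)) :
    (Matrix.of fun i j => if τ j = i then (1:ℝ) else 0)ᵀ
      * (Matrix.of fun i j => if τ j = i then (1:ℝ) else 0) = 1 := by
  ext i j
  rw [mul_apply]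
  rw [Finset.sum_eq_single (τ i) (fun b _ hb => by
    simp only [transpose_apply, of_apply]
    rw [if_neg (fun hh => hb hh.symm), zero_mul]) (by simp)]
  simp only [transpose_apply, of_apply]
  rw [if_pos trivial, one_mul, one_apply]
  by_cases hij : i = j
  · subst hij; simp
  · rw [if_neg (fun hh : τ j = τ i => hij (τ.injective hh).symm), if_neg hij]

private lemma jn_perm_diag_conj (τ : Equiv.Perm (Fin n)) (f : Fin n → ℝ) :
    (Matrix.of fun i j => if τ j = i then (1:ℝ) else 0)ᵀ * diagonal f
      * (Matrix.of fun i j => if τ j = i then (1:ℝ) else 0) = diagonal (fun i => f (τ i)) := by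
  ext i j
  rw [mul_assoc, mul_apply]
  rw [Finset.sum_eq_single (τ i) (fun b _ hb => by
    simp only [transpose_apply, of_apply]
    rw [if_neg (fun hh => hb hh.symm), zero_mul]) (by simp)]
  simp only [transpose_apply, of_apply]
  rw [if_pos trivial, one_mul, mul_apply]
  rw [Finset.sum_eq_single (τ j) (fun b _ hb => by
    simp only [of_apply]
    rw [if_neg (fun hh => hb hh.symm), mul_zero]) (by simp)]
  simp only [of_apply]
  rw [if_pos trivial, mul_one]
  by_cases hij : i = j
  · subst hij; simp
  · rw [diagonal_apply_ne _ (fun hh => hij (τ.injective hh)), diagonal_apply_ne _ hij]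

private lemma jn_det_conj_orth (Q Z : Matrix (Fin n) (Fin n) ℝ) (hQ : Qᵀ * Q = 1) :
    det (Q * Z * Qᵀ) = det Z := by
  have h1 : det Q * det Q = 1 := by
    have h2 := congrArg det hQ
    rw [det_mul, det_transpose, det_one] at h2
    exact h2
  rw [det_mul, det_mul, det_transpose, mul_right_comm, h1, one_mul]

private lemma jn_conj_recover (Q M Z : Matrix (Fin n) (Fin n) ℝ) (hQ : Qᵀ * Q = 1)
    (h : Qᵀ * M * Q = Z) : M = Q * Z * Qᵀ := by
  have h2 : Q * Qᵀ = 1 := mul_eq_one_comm.mp hQ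
  have e1 : M = (Q * Qᵀ) * M * (Q * Qᵀ) := by rw [h2, one_mul, mul_one]
  have e2 : (Q * Qᵀ) * M * (Q * Qᵀ) = Q * (Qᵀ * M * Q) * Qᵀ := by
    simp only [Matrix.mul_assoc]
  rw [e1, e2, h]

private lemma jn_mul_vecMulVec_mul (P Q : Matrix (Fin n) (Fin n) ℝ) (a b : Fin n → ℝ) :
    P * vecMulVec a b * Q = vecMulVec (P *ᵥ a) (b ᵥ* Q) := by
  ext i j
  simp only [mul_apply, vecMulVec_apply, mulVec, vecMul, dotProduct]
  rw [Finset.sum_mul_sum]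
  rw [Finset.sum_comm]
  apply Finset.sum_congr rfl; intro k _
  rw [Finset.sum_mul]
  apply Finset.sum_congr rfl; intro l _
  ring

end JNAux

/-- The adjacency matrix of the complement graph: `J - I - A`. -/
def complMat {V : Type} [Fintype V] [DecidableEq V] (A : Matrix V V ℝ) : Matrix V V ℝ :=
  (Matrix.of fun _ _ => (1 : ℝ)) - 1 - A

/-- Two graphs, given by their adjacency matrices, are generalized cospectral if they are
cospectral and their complements are cospectral. -/
def GenCospectral {V : Type} [Fintype V] [DecidableEq V] (A B : Matrix V V ℝ) : Prop :=
  A.charpoly = B.charpoly ∧ (complMat A).charpoly = (complMat B).charpoly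

/-- The bordered matrix `[[A, b], [bᵀ, 0]]` (adjacency matrix of the overgraph `G + b`). -/
def border {V : Type} [Fintype V] [DecidableEq V] (A : Matrix V V ℝ) (b : V → ℝ) :
    Matrix (V ⊕ Unit) (V ⊕ Unit) ℝ :=
  Matrix.fromBlocks A (Matrix.of fun i _ => b i) (Matrix.of fun _ j => b j) 0

/-- Johnson–Newman. Two graphs are generalized cospectral iff there is a
regular orthogonal matrix `Q` with `Qᵀ A(G) Q = A(H)`. -/
theorem genCospectral_iff_exists_regular_orthogonal
    {n : ℕ} (A B : Matrix (Fin n) (Fin n) ℝ)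
    (hA : A.IsAdjMatrix) (hB : B.IsAdjMatrix) :
    GenCospectral A B ↔
      ∃ Q : Matrix (Fin n) (Fin n) ℝ,
        Qᵀ * Q = 1 ∧ (Q *ᵥ fun _ => (1 : ℝ)) = (fun _ => 1) ∧ Qᵀ * A * Q = B := by
  constructor
  · -- forward direction
    rintro ⟨hchar, hcomp⟩
    classical
    have hAh : A.IsHermitian := by
      rw [Matrix.IsHermitian, conjTranspose_eq_transpose_of_trivial]; exact hA.symm
    have hBh : B.IsHermitian := by
      rw [Matrix.IsHermitian, conjTranspose_eq_transpose_of_trivial]; exact hB.symm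
    set U : Matrix (Fin n) (Fin n) ℝ := (hAh.eigenvectorUnitary : Matrix (Fin n) (Fin n) ℝ)
      with hUdef
    set V : Matrix (Fin n) (Fin n) ℝ := (hBh.eigenvectorUnitary : Matrix (Fin n) (Fin n) ℝ)
      with hVdef
    set dA : Fin n → ℝ := hAh.eigenvalues with hdAdef
    set dB : Fin n → ℝ := hBh.eigenvalues with hdBdef
    have hstarU : star U = Uᵀ := by
      rw [Matrix.star_eq_conjTranspose, conjTranspose_eq_transpose_of_trivial]
    have hstarV : star V = Vᵀ := by
      rw [Matrix.star_eq_conjTranspose, conjTranspose_eq_transpose_of_trivial]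
    have hU : Uᵀ * U = 1 := by rw [← hstarU]; exact Unitary.coe_star_mul_self _
    have hV : Vᵀ * V = 1 := by rw [← hstarV]; exact Unitary.coe_star_mul_self _
    have hofid : ∀ (f : Fin n → ℝ), (RCLike.ofReal ∘ f : Fin n → ℝ) = f := by
      intro f; funext i; simp
    have hAU : Uᵀ * A * U = diagonal dA := by
      have h1 := hAh.conjStarAlgAut_star_eigenvectorUnitary; rw [Unitary.conjStarAlgAut_star_apply] at h1
      rw [hstarU, hofid] at h1
      exact h1
    have hBV : Vᵀ * B * V = diagonal dB := by
      have h1 := hBh.conjStarAlgAut_star_eigenvectorUnitary; rw [Unitary.conjStarAlgAut_star_apply] at h1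
      rw [hstarV, hofid] at h1
      exact h1
    -- eigenvalue multisets coincide
    have hcp : (∏ i, (Polynomial.X - Polynomial.C (dA i)))
        = ∏ i, (Polynomial.X - Polynomial.C (dB i)) := by
      have e1 : A.charpoly = ∏ i, (Polynomial.X - Polynomial.C (dA i)) := by
        rw [← jn_charpoly_conj U A hU, hAU, jn_charpoly_diagonal]
      have e2 : B.charpoly = ∏ i, (Polynomial.X - Polynomial.C (dB i)) := by
        rw [← jn_charpoly_conj V B hV, hBV, jn_charpoly_diagonal]
      rw [← e1, ← e2]; exact hchar
    have hms : Multiset.map dA Finset.univ.val = Multiset.map dB Finset.univ.val := by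
      have r1 : ∀ (f : Fin n → ℝ),
          (∏ i, (Polynomial.X - Polynomial.C (f i))).roots
            = Multiset.map f Finset.univ.val := by
        intro f
        have e3 : (∏ i, (Polynomial.X - Polynomial.C (f i)))
            = ((Multiset.map f Finset.univ.val).map
              (fun a => Polynomial.X - Polynomial.C a)).prod := by
          rw [Multiset.map_map]
          rfl
        rw [e3, Polynomial.roots_multiset_prod_X_sub_C]
      rw [← r1 dA, ← r1 dB, hcp]
    obtain ⟨σ, hσ⟩ := jn_exists_perm dA dB hms
    set P : Matrix (Fin n) (Fin n) ℝ :=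
      Matrix.of (fun i j => if σ⁻¹ j = i then (1:ℝ) else 0) with hPdef
    have hP : Pᵀ * P = 1 := jn_perm_orth σ⁻¹
    set W : Matrix (Fin n) (Fin n) ℝ := V * P with hWdef
    have hW : Wᵀ * W = 1 := by
      have e1 : Wᵀ * W = Pᵀ * (Vᵀ * V) * P := by
        simp only [hWdef, transpose_mul, Matrix.mul_assoc]
      rw [e1, hV, mul_one, hP]
    have hBW : Wᵀ * B * W = diagonal dA := by
      have e1 : Wᵀ * B * W = Pᵀ * (Vᵀ * B * V) * P := by
        simp only [hWdef, transpose_mul, Matrix.mul_assoc]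
      rw [e1, hBV, hPdef, jn_perm_diag_conj σ⁻¹ dB]
      congr 1
      funext i
      rw [← hσ]
      simp
    have hUU : U * Uᵀ = 1 := mul_eq_one_comm.mp hU
    have hWW : W * Wᵀ = 1 := mul_eq_one_comm.mp hW
    set e1v : Fin n → ℝ := fun _ => 1 with he1v
    set u : Fin n → ℝ := Uᵀ *ᵥ e1v with hu
    set w : Fin n → ℝ := Wᵀ *ᵥ e1v with hw
    have hUe : U *ᵥ u = e1v := by
      rw [hu, mulVec_mulVec, hUU, one_mulVec]
    have hWe : W *ᵥ w = e1v := by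
      rw [hw, mulVec_mulVec, hWW, one_mulVec]
    have hJ : (Matrix.of fun _ _ => (1:ℝ)) = vecMulVec e1v e1v := by
      ext i j; simp [vecMulVec_apply, he1v]
    -- the conjugated rank-one form
    have conjform : ∀ (Z Q : Matrix (Fin n) (Fin n) ℝ) (q : Fin n → ℝ) (y : ℝ),
        Qᵀ * Q = 1 → Qᵀ * Z * Q = diagonal dA → q = Qᵀ *ᵥ e1v →
        y • (1:Matrix (Fin n) (Fin n) ℝ) + Z - vecMulVec e1v e1v
          = Q * (diagonal (fun i => y + dA i) - vecMulVec q q) * Qᵀ := by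
      intro Z Q q y hQ hZQ hq
      have hQQ : Q * Qᵀ = 1 := mul_eq_one_comm.mp hQ
      have hQe : Q *ᵥ q = e1v := by rw [hq, mulVec_mulVec, hQQ, one_mulVec]
      rw [Matrix.mul_sub, Matrix.sub_mul]
      congr 1
      · have hdg : diagonal (fun i => y + dA i)
            = y • (1:Matrix (Fin n) (Fin n) ℝ) + diagonal dA := by
          ext i j
          by_cases hij : i = j
          · subst hij; simp [Matrix.one_apply]
          · simp [diagonal_apply_ne _ hij, Matrix.one_apply_ne hij]
        rw [hdg, Matrix.mul_add, Matrix.add_mul]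
        congr 1
        · rw [mul_smul_comm, smul_mul_assoc, mul_one, hQQ]
        · exact jn_conj_recover Q Z _ hQ hZQ
      · rw [jn_mul_vecMulVec_mul, hQe]
        congr 1
        rw [hq, ← transpose_transpose Q, vecMul_transpose, transpose_transpose,
          mulVec_mulVec, hQQ, one_mulVec]
    -- main summation identity
    have hmain : ∀ y : ℝ, (∀ i, y + dA i ≠ 0) →
        ∑ i, (u i ^ 2 - w i ^ 2) * ∏ j ∈ Finset.univ.erase i, (y + dA j) = 0 := by
      intro y hy
      have hev := congrArg (Polynomial.eval (y - 1)) hcomp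
      rw [jn_eval_charpoly, jn_eval_charpoly] at hev
      have hsh : ∀ (Z : Matrix (Fin n) (Fin n) ℝ),
          (y - 1) • (1:Matrix (Fin n) (Fin n) ℝ) - complMat Z
            = y • (1:Matrix (Fin n) (Fin n) ℝ) + Z - vecMulVec e1v e1v := by
        intro Z
        rw [complMat, ← hJ, sub_smul, one_smul]
        abel
      rw [hsh A, hsh B] at hev
      rw [conjform A U u y hU hAU hu, conjform B W w y hW hBW hw] at hev
      rw [jn_det_conj_orth _ _ hU, jn_det_conj_orth _ _ hW] at hev
      rw [jn_det_diag_sub_vecMulVec _ _ hy, jn_det_diag_sub_vecMulVec _ _ hy] at hev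
      have expand : ∀ i : Fin n, (u i ^ 2 - w i ^ 2) * ∏ j ∈ Finset.univ.erase i, (y + dA j)
          = u i ^ 2 * ∏ j ∈ Finset.univ.erase i, (y + dA j)
            - w i ^ 2 * ∏ j ∈ Finset.univ.erase i, (y + dA j) := fun i => by ring
      rw [Finset.sum_congr rfl (fun i _ => expand i), Finset.sum_sub_distrib]
      have h5 : ∑ i, u i ^ 2 * ∏ j ∈ Finset.univ.erase i, (y + dA j)
          = ∑ i, w i ^ 2 * ∏ j ∈ Finset.univ.erase i, (y + dA j) := by linarith
      rw [h5, sub_self]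
    -- block norm sums coincide
    have hblock : ∀ lam : ℝ,
        ∑ i ∈ Finset.univ.filter (fun i => dA i = lam), u i ^ 2
          = ∑ i ∈ Finset.univ.filter (fun i => dA i = lam), w i ^ 2 := by
      intro lam
      have hb := jn_block_sums_eq dA (fun i => u i ^ 2 - w i ^ 2) hmain lam
      rw [Finset.sum_sub_distrib] at hb
      linarith
    obtain ⟨R, hR1, hR2, hR3⟩ := jn_exists_R dA u w hblock
    refine ⟨U * R * Wᵀ, ?_, ?_, ?_⟩
    · have e2 : (U * R * Wᵀ)ᵀ * (U * R * Wᵀ) = W * Rᵀ * (Uᵀ * U) * R * Wᵀ := by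
        simp only [transpose_mul, transpose_transpose, Matrix.mul_assoc]
      rw [e2, hU, mul_one, Matrix.mul_assoc (W * Rᵀ) R Wᵀ, Matrix.mul_assoc W Rᵀ (R * Wᵀ),
        ← Matrix.mul_assoc Rᵀ R Wᵀ, hR1, one_mul, hWW]
    · show (U * R * Wᵀ) *ᵥ e1v = e1v
      rw [← mulVec_mulVec, ← mulVec_mulVec, ← hw, hR3, hUe]
    · have e2 : (U * R * Wᵀ)ᵀ * A * (U * R * Wᵀ) = W * Rᵀ * (Uᵀ * A * U) * R * Wᵀ := by
        simp only [transpose_mul, transpose_transpose, Matrix.mul_assoc]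
      rw [e2, hAU]
      have e3 : W * Rᵀ * diagonal dA * R * Wᵀ = W * (Rᵀ * diagonal dA * R) * Wᵀ := by
        simp only [Matrix.mul_assoc]
      have e4 : Rᵀ * diagonal dA * R = diagonal dA := by
        rw [Matrix.mul_assoc, ← hR2, ← Matrix.mul_assoc, hR1, one_mul]
      rw [e3, e4]
      exact (jn_conj_recover W B _ hW hBW).symm
  · -- backward direction
    rintro ⟨Q, hQ, hQe, hQA⟩
    have hQe' : Qᵀ *ᵥ (fun _ => (1:ℝ)) = (fun _ => (1:ℝ)) := by
      conv_lhs => rw [← hQe]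
      rw [mulVec_mulVec, hQ, one_mulVec]
    have hJ : (Matrix.of fun _ _ => (1:ℝ) : Matrix (Fin n) (Fin n) ℝ)
        = vecMulVec (fun _ => (1:ℝ)) (fun _ => (1:ℝ)) := by
      ext i j; simp [vecMulVec_apply]
    have hJconj : Qᵀ * (Matrix.of fun _ _ => (1:ℝ) : Matrix (Fin n) (Fin n) ℝ) * Q
        = (Matrix.of fun _ _ => (1:ℝ) : Matrix (Fin n) (Fin n) ℝ) := by
      rw [hJ, jn_mul_vecMulVec_mul, hQe']
      congr 1
      have hv : (fun _ => (1:ℝ)) ᵥ* Q = Qᵀ *ᵥ (fun _ => (1:ℝ)) := by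
        funext j; simp [vecMul, mulVec, dotProduct, transpose_apply, mul_comm]
      rw [hv, hQe']
    have hcompl : Qᵀ * complMat A * Q = complMat B := by
      rw [complMat, complMat, ← hQA]
      rw [Matrix.mul_sub, Matrix.mul_sub, Matrix.sub_mul, Matrix.sub_mul, hJconj, mul_one, hQ]
    constructor
    · rw [← hQA]
      exact (jn_charpoly_conj Q A hQ).symm
    · rw [← hcompl]
      exact (jn_charpoly_conj Q (complMat A) hQ).symm


end
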